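/- Let F ∈ ℝ^{n×n}, let Σ be a symmetric positive definite n×n real matrix, and let Q be a symmetric positive semidefinite n×n real matrix such that FΣ + ΣFᵀ + Q = 0. Then every eigenvalue of F, viewed as a complex matrix, has real part less than or equal to zero; i.e., the spectrum of F lies in the closed left half-plane. -/

import Mathlib

open Matrix

/-- The controllability matrix `[B, AB, A²B, …, A^{n−1}B]` (columns indexed by `Fin n × Fin m`). -/
def ctrbMatrix {n m : ℕ} (A : Matrix (Fin n) (Fin n) ℝ) (B : Matrix (Fin n) (Fin m) ℝ) :
    Matrix (Fin n) (Fin n × Fin m) ℝ :=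
  Matrix.of fun i p => ((A ^ (p.1 : ℕ)) * B) i p.2

/-- `(A,B)` is a controllable pair iff the controllability matrix has rank `n`. -/
def IsControllablePair {n m : ℕ} (A : Matrix (Fin n) (Fin n) ℝ)
    (B : Matrix (Fin n) (Fin m) ℝ) : Prop :=
  (ctrbMatrix A B).rank = n

/-- A real square matrix is Hurwitz iff all its (complex) eigenvalues have negative real part. -/
def IsHurwitz {n : ℕ} (F : Matrix (Fin n) (Fin n) ℝ) : Prop :=
  ∀ μ ∈ spectrum ℂ (F.map (algebraMap ℝ ℂ)), μ.re < 0

open Complex ComplexOrder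


lemma map_conjTranspose_real {n : ℕ} (A : Matrix (Fin n) (Fin n) ℝ) :
    (A.map (algebraMap ℝ ℂ))ᴴ = Aᵀ.map (algebraMap ℝ ℂ) := by
  ext i j
  simp [conjTranspose_apply, Complex.conj_ofReal]

lemma posSemidef_map_complex {n : ℕ} {Q : Matrix (Fin n) (Fin n) ℝ} (hQ : Q.PosSemidef) :
    (Q.map (algebraMap ℝ ℂ)).PosSemidef := by
  obtain ⟨B, hB⟩ : ∃ B : Matrix (Fin n) (Fin n) ℝ, Q = Bᴴ * B := by
    open scoped MatrixOrder in
    obtain ⟨X, hX, -, rfl⟩ := CFC.exists_sqrt_of_isSelfAdjoint_of_quasispectrumRestricts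
      hQ.isHermitian (QuasispectrumRestricts.nnreal_of_nonneg hQ.nonneg)
    exact ⟨X, congrArg (· * X) hX.star_eq.symm⟩
  have h : Q.map (algebraMap ℝ ℂ) = (B.map (algebraMap ℝ ℂ))ᴴ * (B.map (algebraMap ℝ ℂ)) := by
    rw [map_conjTranspose_real, hB]
    ext i j
    simp [Matrix.mul_apply, Matrix.conjTranspose_apply, Matrix.map_apply]
  rw [h]
  exact Matrix.posSemidef_conjTranspose_mul_self _


/-- if `FΣ + ΣFᵀ + Q = 0` with `Σ ≻ 0` and `Q ⪰ 0`, then the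
spectrum of `F` lies in the closed left half-plane. -/
theorem stmt19 {n : ℕ} (F : Matrix (Fin n) (Fin n) ℝ)
    (S : Matrix (Fin n) (Fin n) ℝ) (hS : S.PosDef)
    (Q : Matrix (Fin n) (Fin n) ℝ) (hQ : Q.PosSemidef)
    (hLyap : F * S + S * Fᵀ + Q = 0) :
    ∀ μ ∈ spectrum ℂ (F.map (algebraMap ℝ ℂ)), μ.re ≤ 0 := by
  intro μ hμ
  set M := F.map (algebraMap ℝ ℂ) with hM
  set S' := S.map (algebraMap ℝ ℂ) with hS'def
  set Q' := Q.map (algebraMap ℝ ℂ) with hQ'def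
  rw [spectrum.mem_iff] at hμ
  have hdet : (μ • (1 : Matrix (Fin n) (Fin n) ℂ) - M).det = 0 := by
    by_contra h
    exact hμ (by
      rw [Algebra.algebraMap_eq_smul_one]
      exact (Matrix.isUnit_iff_isUnit_det _).2 (isUnit_iff_ne_zero.2 h))
  have hdet2 : ((starRingEnd ℂ μ) • (1 : Matrix (Fin n) (Fin n) ℂ) - Mᴴ).det = 0 := by
    have : ((starRingEnd ℂ μ) • (1 : Matrix (Fin n) (Fin n) ℂ) - Mᴴ) =
        (μ • (1 : Matrix (Fin n) (Fin n) ℂ) - M)ᴴ := by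
      rw [conjTranspose_sub, conjTranspose_smul, conjTranspose_one]
      rfl
    rw [this, Matrix.det_conjTranspose, hdet, star_zero]
  obtain ⟨v, hv0, hv⟩ := (Matrix.exists_mulVec_eq_zero_iff).mpr hdet2
  have hev : Mᴴ *ᵥ v = (starRingEnd ℂ μ) • v := by
    have := hv
    rw [sub_mulVec, smul_mulVec, one_mulVec, sub_eq_zero] at this
    exact this.symm
  -- map the Lyapunov equation
  have hLyapC : M * S' + S' * Mᴴ + Q' = 0 := by
    have h := congrArg ((algebraMap ℝ ℂ).mapMatrix) hLyap
    simp only [_root_.map_add, _root_.map_mul, _root_.map_zero] at h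
    simp only [RingHom.mapMatrix_apply] at h
    rw [map_conjTranspose_real]
    exact h
  set a : ℂ := star v ⬝ᵥ (S' *ᵥ v) with ha
  set q : ℂ := star v ⬝ᵥ (Q' *ᵥ v) with hqdef
  have key : μ * a + (starRingEnd ℂ μ) * a + q = 0 := by
    have h0 : star v ⬝ᵥ ((M * S' + S' * Mᴴ + Q') *ᵥ v) = 0 := by
      rw [hLyapC]; simp
    rw [add_mulVec, add_mulVec, dotProduct_add, dotProduct_add] at h0
    have h1 : star v ⬝ᵥ ((M * S') *ᵥ v) = μ * a := by
      rw [← mulVec_mulVec, dotProduct_mulVec]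
      have : star v ᵥ* M = μ • star v := by
        have := congrArg star hev
        rw [star_mulVec, star_smul, conjTranspose_conjTranspose] at this
        simpa using this
      rw [this, smul_dotProduct, smul_eq_mul, ha, dotProduct_mulVec]
    have h2 : star v ⬝ᵥ ((S' * Mᴴ) *ᵥ v) = (starRingEnd ℂ μ) * a := by
      rw [← mulVec_mulVec, hev, mulVec_smul, dotProduct_smul, smul_eq_mul]
    rw [h1, h2] at h0
    exact h0
  -- positivity facts
  have hapos : 0 < a.re ∧ a.im = 0 := by
    have hsemi := posSemidef_map_complex hS.posSemidef
    have hle : 0 ≤ a := hsemi.dotProduct_mulVec_nonneg v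
    have hane : a ≠ 0 := by
      intro h
      have : S' *ᵥ v = 0 := (hsemi.dotProduct_mulVec_zero_iff v).mp (by rw [← ha]; exact h)
      have hSdet : S'.det ≠ 0 := by
        rw [hS'def, ← RingHom.mapMatrix_apply, ← RingHom.map_det]
        simpa using ne_of_gt hS.det_pos
      have : v = 0 := by
        by_contra hv0'
        exact hSdet ((Matrix.exists_mulVec_eq_zero_iff).mp ⟨v, hv0', this⟩)
      exact hv0 this
    have : 0 < a := lt_of_le_of_ne hle (Ne.symm hane)
    rw [Complex.lt_def] at this
    exact ⟨by simpa using this.1, by simpa using this.2.symm⟩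
  have hqnn : 0 ≤ q.re := by
    have := (posSemidef_map_complex hQ).dotProduct_mulVec_nonneg v
    rw [Complex.le_def] at this
    simpa [hqdef, hQ'def] using this.1
  -- take real parts
  have hre := congrArg Complex.re key
  simp [Complex.add_re, Complex.mul_re, Complex.conj_re, Complex.conj_im] at hre
  nlinarith [hapos.1, hapos.2, hqnn, hre]
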